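/- Let P₀, P₁, Q₀, Q₁ be orthogonal projections on a finite-dimensional complex Hilbert space H with P₀ + P₁ = I and Q₀ + Q₁ = I. Then H decomposes as an orthogonal direct sum of subspaces, each of dimension 1 or 2, each of which is invariant under all four projections. -/

import Mathlib

open FiniteDimensional

local notation "⟪" x ", " y "⟫" => @inner ℂ _ _ x y

theorem aux_decomp {H : Type*} [NormedAddCommGroup H] [InnerProductSpace ℂ H]
    [FiniteDimensional ℂ H]
    (P Q : H →ₗ[ℂ] H) (hP2 : P ∘ₗ P = P) (hQ2 : Q ∘ₗ Q = Q)
    (hPs : P.IsSymmetric) (hQs : Q.IsSymmetric) :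
    ∀ (n : ℕ) (E : Submodule ℂ H), Module.finrank ℂ E = n →
      (∀ x ∈ E, P x ∈ E) → (∀ x ∈ E, Q x ∈ E) →
      ∃ (k : ℕ) (V : Fin k → Submodule ℂ H),
        (∀ i j, i ≠ j → ∀ x ∈ V i, ∀ y ∈ V j, (inner ℂ x y : ℂ) = 0) ∧
        (∀ i, Module.finrank ℂ (V i) = 1 ∨ Module.finrank ℂ (V i) = 2) ∧
        (∀ i, ∀ x ∈ V i, P x ∈ V i ∧ Q x ∈ V i) ∧
        (⨆ i, V i) = E := by
  have hP' : ∀ y, P (P y) = P y := fun y => congrFun (congrArg DFunLike.coe hP2) y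
  have hQ' : ∀ y, Q (Q y) = Q y := fun y => congrFun (congrArg DFunLike.coe hQ2) y
  intro n
  induction n using Nat.strong_induction_on with
  | _ n ih =>
    intro E hEn hPE hQE
    by_cases hE : E = ⊥
    · refine ⟨0, Fin.elim0, ?_, ?_, ?_, ?_⟩
      · intro i; exact i.elim0
      · intro i; exact i.elim0
      · intro i; exact i.elim0
      · simp [hE]
    -- the commuting operator C
    set C : H →ₗ[ℂ] H := P + Q - P ∘ₗ Q - Q ∘ₗ P with hC
    have hCapp : ∀ x, C x = P x + Q x - P (Q x) - Q (P x) := by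
      intro x; simp [hC]
    have hCQ : ∀ x, C (Q x) = Q (C x) := by
      intro x
      simp only [hCapp, hQ', map_add, map_sub]
      abel
    have hCE : ∀ x ∈ E, C x ∈ E := by
      intro x hx
      rw [hCapp]
      exact E.sub_mem (E.sub_mem (E.add_mem (hPE x hx) (hQE x hx)) (hPE _ (hQE x hx)))
        (hQE _ (hPE x hx))
    haveI : Nontrivial E := Submodule.nontrivial_iff_ne_bot.mpr hE
    obtain ⟨c, hc⟩ := Module.End.exists_eigenvalue (C.restrict hCE)
    obtain ⟨v, hv⟩ := hc.exists_hasEigenvector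
    have hvC : C (v : H) = c • (v : H) := by
      have := hv.apply_eq_smul
      calc C (v : H) = ((C.restrict hCE) v : H) := (C.restrict_coe_apply hCE v).symm
        _ = c • (v : H) := by rw [this]; simp
    -- the joint eigenspace F
    set F : Submodule ℂ H := E ⊓ LinearMap.ker (C - c • LinearMap.id) with hF
    have hmemF : ∀ x, x ∈ F ↔ x ∈ E ∧ C x = c • x := by
      intro x
      simp [hF, LinearMap.mem_ker, sub_eq_zero]
    have hQF : ∀ x ∈ F, Q x ∈ F := by
      intro x hx
      rw [hmemF] at hx ⊢
      exact ⟨hQE x hx.1, by rw [hCQ, hx.2, map_smul]⟩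
    haveI : Nontrivial F := by
      refine Submodule.nontrivial_iff_ne_bot.mpr (fun h => hv.2 ?_)
      have hvF : (v : H) ∈ F := (hmemF _).mpr ⟨v.2, hvC⟩
      rw [h] at hvF
      simpa [Submodule.coe_eq_zero] using hvF
    obtain ⟨μ, hμ⟩ := Module.End.exists_eigenvalue (Q.restrict hQF)
    obtain ⟨w', hw'⟩ := hμ.exists_hasEigenvector
    set w : H := (w' : H) with hwdef
    have hw0 : w ≠ 0 := fun h => hw'.2 (by simpa [hwdef, Submodule.coe_eq_zero] using h)
    have hwF : w ∈ F := w'.2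
    have hwE : w ∈ E := ((hmemF _).mp hwF).1
    have hwC : C w = c • w := ((hmemF _).mp hwF).2
    have hwQ : Q w = μ • w := by
      have := hw'.apply_eq_smul
      calc Q w = ((Q.restrict hQF) w' : H) := (Q.restrict_coe_apply hQF w').symm
        _ = μ • w := by rw [this]; simp [hwdef]
    -- the 1- or 2-dimensional invariant subspace W
    set W : Submodule ℂ H := Submodule.span ℂ {w, P w} with hW
    have hwW : w ∈ W := Submodule.subset_span (by simp)
    have hPwW : P w ∈ W := Submodule.subset_span (by simp)
    have hWE : W ≤ E := Submodule.span_le.mpr (by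
      rintro x (rfl | rfl)
      · exact hwE
      · exact hPE w hwE)
    have hQPw : Q (P w) = (1 - μ) • P w + (μ - c) • w := by
      have h := hwC
      rw [hCapp, hwQ, map_smul] at h
      have : Q (P w) = P w + μ • w - μ • P w - c • w := by
        rw [eq_sub_iff_add_eq, ← h]; abel
      rw [this, sub_smul, sub_smul, one_smul]; abel
    have hWinv : ∀ x ∈ W, P x ∈ W ∧ Q x ∈ W := by
      intro x hx
      obtain ⟨a, b, rfl⟩ := Submodule.mem_span_pair.mp hx
      constructor
      · rw [map_add, map_smul, map_smul, hP']
        exact W.add_mem (W.smul_mem a hPwW) (W.smul_mem b hPwW)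
      · rw [map_add, map_smul, map_smul, hwQ, hQPw]
        exact W.add_mem (W.smul_mem a (W.smul_mem μ hwW))
          (W.smul_mem b (W.add_mem (W.smul_mem _ hPwW) (W.smul_mem _ hwW)))
    have hWrank : Module.finrank ℂ W = 1 ∨ Module.finrank ℂ W = 2 := by
      have h1 : 1 ≤ Module.finrank ℂ W := by
        have : Submodule.span ℂ {w} ≤ W := Submodule.span_mono (by simp)
        have := Submodule.finrank_mono this
        rwa [finrank_span_singleton hw0] at this
      have hle1 : ∀ z : H, Module.finrank ℂ (Submodule.span ℂ {z}) ≤ 1 := by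
        intro z
        by_cases hz : z = 0
        · rw [hz, Submodule.span_zero_singleton]
          simp
        · rw [finrank_span_singleton hz]
      have h2 : Module.finrank ℂ W ≤ 2 := by
        have hWeq : W = Submodule.span ℂ {w} ⊔ Submodule.span ℂ {P w} := by
          rw [hW, Submodule.span_insert]
        rw [hWeq]
        have h := Submodule.finrank_sup_add_finrank_inf_eq
          (Submodule.span ℂ {w}) (Submodule.span ℂ {P w})
        have ha := hle1 w
        have hb := hle1 (P w)
        omega
      omega
    -- the orthogonal complement E' of W inside E
    set E' : Submodule ℂ H := Wᗮ ⊓ E with hE'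
    have hsup : W ⊔ E' = E := Submodule.sup_orthogonal_inf_of_hasOrthogonalProjection hWE
    have hdisj : W ⊓ E' = ⊥ := by
      rw [hE', ← inf_assoc]
      simp [Submodule.inf_orthogonal_eq_bot]
    have hrankE' : Module.finrank ℂ E' < n := by
      have := Submodule.finrank_sup_add_finrank_inf_eq W E'
      rw [hsup, hdisj, hEn] at this
      simp only [finrank_bot, add_zero] at this
      omega
    have hPE' : ∀ x ∈ E', P x ∈ E' := by
      intro x hx
      have hx1 := (Submodule.mem_orthogonal W x).mp hx.1
      refine ⟨(Submodule.mem_orthogonal W (P x)).mpr ?_, hPE x hx.2⟩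
      intro u hu
      calc ⟪u, P x⟫ = ⟪P u, x⟫ := (hPs u x).symm
        _ = 0 := hx1 (P u) (hWinv u hu).1
    have hQE' : ∀ x ∈ E', Q x ∈ E' := by
      intro x hx
      have hx1 := (Submodule.mem_orthogonal W x).mp hx.1
      refine ⟨(Submodule.mem_orthogonal W (Q x)).mpr ?_, hQE x hx.2⟩
      intro u hu
      calc ⟪u, Q x⟫ = ⟪Q u, x⟫ := (hQs u x).symm
        _ = 0 := hx1 (Q u) (hWinv u hu).2
    obtain ⟨k, V', hV'orth, hV'rank, hV'inv, hV'sup⟩ :=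
      ih (Module.finrank ℂ E') hrankE' E' rfl hPE' hQE'
    have hV'W : ∀ j x, x ∈ V' j → x ∈ E' := by
      intro j x hx
      have : V' j ≤ E' := hV'sup ▸ le_iSup V' j
      exact this hx
    refine ⟨k + 1, Fin.cons W V', ?_, ?_, ?_, ?_⟩
    · intro i j hij
      induction i using Fin.cases with
      | zero =>
        induction j using Fin.cases with
        | zero => exact absurd rfl hij
        | succ j' =>
          intro x hx y hy
          simp only [Fin.cons_zero, Fin.cons_succ] at hx hy
          exact (hV'W j' y hy).1 x hx
      | succ i' =>
        induction j using Fin.cases with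
        | zero =>
          intro x hx y hy
          simp only [Fin.cons_zero, Fin.cons_succ] at hx hy
          have h0 : ⟪y, x⟫ = 0 := (hV'W i' x hx).1 y hy
          rw [← inner_conj_symm]
          simp [h0]
        | succ j' =>
          simp only [Fin.cons_succ]
          exact hV'orth i' j' (fun h => hij (congrArg Fin.succ h))
    · intro i
      induction i using Fin.cases with
      | zero => rw [Fin.cons_zero]; exact hWrank
      | succ i' => rw [Fin.cons_succ]; exact hV'rank i'
    · intro i
      induction i using Fin.cases with
      | zero => simpa using hWinv
      | succ i' => simpa using hV'inv i'
    · apply le_antisymm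
      · apply iSup_le
        intro i
        induction i using Fin.cases with
        | zero => exact hsup ▸ (le_sup_left : W ≤ W ⊔ E')
        | succ i' =>
          simp only [Fin.cons_succ]
          exact le_trans (hV'sup ▸ le_iSup V' i') (hsup ▸ le_sup_right)
      · rw [← hsup]
        apply sup_le
        · exact le_iSup_of_le 0 (by simp)
        · rw [← hV'sup]
          apply iSup_le
          intro j
          exact le_iSup_of_le j.succ (by simp)

theorem stmt_9 {H : Type*} [NormedAddCommGroup H] [InnerProductSpace ℂ H]
    [FiniteDimensional ℂ H]
    (P₀ P₁ Q₀ Q₁ : H →ₗ[ℂ] H)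
    (hP₀ : P₀ ∘ₗ P₀ = P₀) (hP₁ : P₁ ∘ₗ P₁ = P₁)
    (hQ₀ : Q₀ ∘ₗ Q₀ = Q₀) (hQ₁ : Q₁ ∘ₗ Q₁ = Q₁)
    (hP₀s : P₀.IsSymmetric) (hP₁s : P₁.IsSymmetric)
    (hQ₀s : Q₀.IsSymmetric) (hQ₁s : Q₁.IsSymmetric)
    (hP : P₀ + P₁ = LinearMap.id) (hQ : Q₀ + Q₁ = LinearMap.id) :
    ∃ (ι : Type) (_ : Fintype ι) (_ : DecidableEq ι) (V : ι → Submodule ℂ H),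
      DirectSum.IsInternal V ∧
      (∀ i j, i ≠ j → ∀ x ∈ V i, ∀ y ∈ V j, (inner ℂ x y : ℂ) = 0) ∧
      (∀ i, Module.finrank ℂ (V i) = 1 ∨ Module.finrank ℂ (V i) = 2) ∧
      (∀ i, ∀ x ∈ V i, P₀ x ∈ V i ∧ P₁ x ∈ V i ∧ Q₀ x ∈ V i ∧ Q₁ x ∈ V i) := by
  obtain ⟨k, V, horth, hrank, hinv, hsup⟩ :=
    aux_decomp P₀ Q₀ hP₀ hQ₀ hP₀s hQ₀s (Module.finrank ℂ (⊤ : Submodule ℂ H)) ⊤ rfl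
      (fun x _ => trivial) (fun x _ => trivial)
  have hP₁' : ∀ x, P₁ x = x - P₀ x := by
    intro x
    have h := congrFun (congrArg DFunLike.coe hP) x
    simp only [LinearMap.add_apply, LinearMap.id_apply] at h
    exact eq_sub_of_add_eq' h
  have hQ₁' : ∀ x, Q₁ x = x - Q₀ x := by
    intro x
    have h := congrFun (congrArg DFunLike.coe hQ) x
    simp only [LinearMap.add_apply, LinearMap.id_apply] at h
    exact eq_sub_of_add_eq' h
  refine ⟨Fin k, inferInstance, inferInstance, V, ?_, horth, hrank, ?_⟩
  · have hOF : OrthogonalFamily ℂ (fun i => V i) (fun i => (V i).subtypeₗᵢ) := by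
      intro i j hij u u'
      exact horth i j hij u u.2 u' u'.2
    rw [hOF.isInternal_iff, hsup]
    exact Submodule.top_orthogonal_eq_bot
  · intro i x hx
    obtain ⟨h0, h1⟩ := hinv i x hx
    exact ⟨h0, by rw [hP₁']; exact (V i).sub_mem hx h0,
      h1, by rw [hQ₁']; exact (V i).sub_mem hx h1⟩
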